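/- Suppose b satisfies the inf-sup condition on the classical pair (V_H, Q_H ∩ L²₀(Ω)) with constant ρ > 0, i.e., sup_{v_H ∈ V_H\{0}} b(v_H, q_H)/‖v_H‖_{H(div)} ≥ ρ‖q_H‖_{L²} for all q_H ∈ Q_H ∩ L²₀(Ω). Then the multiscale pair (V^ms, Q_H ∩ L²₀(Ω)) satisfies the inf-sup condition with constant ρ(1 + β/α)^{-1}: for all q_H ∈ Q_H ∩ L²₀(Ω), sup_{v^ms ∈ V^ms\{0}} b(v^ms, q_H)/‖v^ms‖_{H(div)} ≥ ρ(1 + β/α)^{-1}‖q_H‖_{L²}. -/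

import Mathlib

open scoped RealInnerProductSpace

set_option maxHeartbeats 1000000 in
/-- **Inf-sup stability transfers from `(V_H, Q_H ∩ L²₀)` to `(V^ms, Q_H ∩ L²₀)`
with constant `ρ(1 + β/α)⁻¹`.**  Abstract model: `Hdiv = H₀(div,Ω)` with
`L²`-realization `ι`, divergence `D` and `H(div)`-norm identity; `Ainv` models `A⁻¹`
with spectral bounds `α, β`; `π` is the stable commuting quasi-interpolation with
`V_H = im π`, `W_{div0} = ker π ⊓ ker D`, and `𝒞` the correction operator
(`a(𝒞v,w) = a(v,w)` for `w ∈ W_{div0}` with `a(u,v) = (A⁻¹ιu, ιv)`, `div 𝒞v = 0`).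
If `b(v,q) = (div v, q)` satisfies the inf-sup condition on `(V_H, Q_H ∩ L²₀)` with
constant `ρ`, then it satisfies it on `(V^ms, Q_H ∩ L²₀)` with constant `ρ(1+β/α)⁻¹`. -/
theorem multiscale_infsup
    {Hdiv L2v S : Type*}
    [NormedAddCommGroup Hdiv] [InnerProductSpace ℝ Hdiv] [CompleteSpace Hdiv]
    [NormedAddCommGroup L2v] [InnerProductSpace ℝ L2v] [CompleteSpace L2v]
    [NormedAddCommGroup S] [InnerProductSpace ℝ S] [CompleteSpace S]
    (ι : Hdiv →L[ℝ] L2v) (D : Hdiv →L[ℝ] S)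
    (hnorm : ∀ v : Hdiv, ‖v‖ ^ 2 = ‖ι v‖ ^ 2 + ‖D v‖ ^ 2)
    (Ainv : L2v →L[ℝ] L2v) (hAsym : ∀ w z : L2v, ⟪Ainv w, z⟫ = ⟪w, Ainv z⟫)
    (α β : ℝ) (hα : 0 < α) (hβ : 0 < β)
    (hlow : ∀ w : L2v, α * ‖w‖ ^ 2 ≤ ⟪Ainv w, w⟫)
    (hupp : ∀ w : L2v, ⟪Ainv w, w⟫ ≤ β * ‖w‖ ^ 2)
    (π 𝒞 : Hdiv →L[ℝ] Hdiv) (hπproj : ∀ v : Hdiv, π (π v) = π v)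
    (h𝒞mem : ∀ v : Hdiv, 𝒞 v ∈ LinearMap.ker (π : Hdiv →ₗ[ℝ] Hdiv) ⊓ LinearMap.ker (D : Hdiv →ₗ[ℝ] S))
    (h𝒞eq : ∀ v : Hdiv, ∀ w ∈ LinearMap.ker (π : Hdiv →ₗ[ℝ] Hdiv) ⊓ LinearMap.ker (D : Hdiv →ₗ[ℝ] S),
      ⟪Ainv (ι (𝒞 v)), ι w⟫ = ⟪Ainv (ι v), ι w⟫)
    (QH L0 : Submodule ℝ S)
    (ρ : ℝ) (hρ : 0 < ρ)
    (hinfsup : ∀ qH ∈ QH ⊓ L0,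
      ∃ vH ∈ LinearMap.range (π : Hdiv →ₗ[ℝ] Hdiv), vH ≠ 0 ∧ ρ * ‖qH‖ * ‖vH‖ ≤ ⟪D vH, qH⟫) :
    ∀ qH ∈ QH ⊓ L0,
      ∃ v ∈ Submodule.map ((ContinuousLinearMap.id ℝ Hdiv - 𝒞) : Hdiv →ₗ[ℝ] Hdiv)
        (LinearMap.range (π : Hdiv →ₗ[ℝ] Hdiv)),
        v ≠ 0 ∧ ρ * (1 + β / α)⁻¹ * ‖qH‖ * ‖v‖ ≤ ⟪D v, qH⟫ := by
  intro qH hqH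
  obtain ⟨vH, hvH, hvH0, hineq⟩ := hinfsup qH hqH
  have hπvH : π vH = vH := by
    obtain ⟨u, hu⟩ := hvH
    rw [← hu, ContinuousLinearMap.coe_coe, hπproj]
  have hcπ : π (𝒞 vH) = 0 := (h𝒞mem vH).1
  have hcD : D (𝒞 vH) = 0 := (h𝒞mem vH).2
  set v : Hdiv := vH - 𝒞 vH with hvdef
  have hmem : v ∈ Submodule.map
      ((ContinuousLinearMap.id ℝ Hdiv - 𝒞) : Hdiv →ₗ[ℝ] Hdiv) (LinearMap.range (π : Hdiv →ₗ[ℝ] Hdiv)) := by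
    exact ⟨vH, hvH, by simp [hvdef]⟩
  have hvne : v ≠ 0 := by
    intro h0
    have : vH = 𝒞 vH := by
      have := sub_eq_zero.mp (hvdef ▸ h0)
      exact this
    apply hvH0
    rw [← hπvH, this, hcπ]
  set t : ℝ := β / α with htdef
  have ht0 : 0 < t := div_pos hβ hα
  set u : L2v := ι vH with hudef
  set w : L2v := ι (𝒞 vH) with hwdef
  have h1 : ⟪Ainv w, w⟫ = ⟪Ainv u, w⟫ := h𝒞eq vH (𝒞 vH) (h𝒞mem vH)
  have hsym : ⟪Ainv w, u⟫ = ⟪Ainv u, w⟫ := by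
    rw [hAsym, real_inner_comm]
  have hww : ⟪Ainv w, w⟫ ≤ ⟪Ainv u, u⟫ := by
    have h2 : (0:ℝ) ≤ ⟪Ainv (u - w), u - w⟫ := by
      refine le_trans ?_ (hlow (u - w))
      positivity
    have hexp : ⟪Ainv (u - w), u - w⟫
        = ⟪Ainv u, u⟫ - ⟪Ainv u, w⟫ - ⟪Ainv w, u⟫ + ⟪Ainv w, w⟫ := by
      simp [map_sub, inner_sub_left, inner_sub_right]
      ring
    rw [hexp] at h2
    linarith
  have hαβ : α * ‖w‖ ^ 2 ≤ β * ‖u‖ ^ 2 :=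
    le_trans (hlow w) (le_trans hww (hupp u))
  have hW : ‖w‖ ≤ t * ‖u‖ := by
    by_cases hu0 : u = 0
    · have : ‖w‖ ^ 2 ≤ 0 := by
        have := hαβ
        rw [hu0] at this
        simp at this
        nlinarith
      have hw0 : ‖w‖ = 0 := by nlinarith [norm_nonneg w]
      rw [hw0, hu0]
      simp
    · have hu0' : 0 < ‖u‖ := norm_pos_iff.mpr hu0
      have hαβ' : α ≤ β := by nlinarith [hlow u, hupp u, pow_pos hu0' 2]
      have ht1 : 1 ≤ t := (one_le_div hα).mpr hαβ'
      have : ‖w‖ ^ 2 ≤ (t * ‖u‖) ^ 2 := by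
        have h3 : ‖w‖ ^ 2 ≤ t * ‖u‖ ^ 2 := by
          rw [htdef, div_mul_eq_mul_div, le_div_iff₀ hα]
          nlinarith
        nlinarith
      exact (pow_le_pow_iff_left₀ (norm_nonneg w)
        (mul_nonneg ht0.le (norm_nonneg u)) two_ne_zero).mp this
  have hDv : D v = D vH := by
    rw [hvdef, map_sub, hcD, sub_zero]
  have hιv : ‖ι v‖ ≤ (1 + t) * ‖u‖ := by
    have : ι v = u - w := by rw [hvdef, map_sub]
    rw [this]
    refine le_trans (norm_sub_le u w) ?_
    have := hW
    linarith
  have hvnorm : ‖v‖ ≤ (1 + t) * ‖vH‖ := by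
    have h4 : ‖v‖ ^ 2 ≤ ((1 + t) * ‖vH‖) ^ 2 := by
      have h5 := hnorm v
      have h6 := hnorm vH
      rw [hDv] at h5
      have hιv2 : ‖ι v‖ ^ 2 ≤ ((1 + t) * ‖u‖) ^ 2 :=
        pow_le_pow_left₀ (norm_nonneg _) hιv 2
      nlinarith [mul_nonneg (mul_nonneg ht0.le ht0.le) (sq_nonneg ‖D vH‖),
        mul_nonneg ht0.le (sq_nonneg ‖D vH‖)]
    exact (pow_le_pow_iff_left₀ (norm_nonneg v)
      (mul_nonneg (by linarith : (0:ℝ) ≤ 1 + t) (norm_nonneg vH)) two_ne_zero).mp h4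
  refine ⟨v, hmem, hvne, ?_⟩
  rw [hDv]
  have h7 : (1 + t)⁻¹ * ‖v‖ ≤ ‖vH‖ := by
    rw [inv_mul_le_iff₀ (by linarith : (0:ℝ) < 1 + t)]
    linarith [hvnorm]
  have h8 : ρ * (1 + t)⁻¹ * ‖qH‖ * ‖v‖ ≤ ρ * ‖qH‖ * ‖vH‖ := by
    have hq : 0 ≤ ρ * ‖qH‖ := mul_nonneg hρ.le (norm_nonneg qH)
    calc ρ * (1 + t)⁻¹ * ‖qH‖ * ‖v‖ = (ρ * ‖qH‖) * ((1 + t)⁻¹ * ‖v‖) := by ring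
    _ ≤ (ρ * ‖qH‖) * ‖vH‖ := by exact mul_le_mul_of_nonneg_left h7 hq
    _ = ρ * ‖qH‖ * ‖vH‖ := by ring
  linarith
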